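/- Let $f, g : \mathbb{R} \to \mathbb{R}$ be continuously differentiable functions of period $1$, and let $R$ be a positive integer. Then $\left|\int_0^1 g(x) f(Rx)\,dx - \int_0^1 g(x)\,dx \int_0^1 f(x)\,dx\right| \le \frac{\|g'\|_\infty}{R} \int_0^1 |f(x)|\,dx$. -/

import Mathlib

open MeasureTheory intervalIntegral

/-- Functional mixing lemma: for `C¹` 1-periodic `f, g` and a positive integer `R`,
`|∫₀¹ g(x) f(Rx) dx - ∫₀¹ g ∫₀¹ f| ≤ (‖g'‖_∞ / R) ∫₀¹ |f|`. -/
theorem mixing_lemma (f g : ℝ → ℝ) (hf : ContDiff ℝ 1 f) (hg : ContDiff ℝ 1 g)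
    (hfper : Function.Periodic f 1) (hgper : Function.Periodic g 1)
    (R : ℕ) (hR : 0 < R) (K : ℝ) (hK : ∀ x, |deriv g x| ≤ K) :
    |(∫ x in (0:ℝ)..1, g x * f (R * x)) -
      (∫ x in (0:ℝ)..1, g x) * (∫ x in (0:ℝ)..1, f x)| ≤
    (K / R) * ∫ x in (0:ℝ)..1, |f x| := by
  have hfc : Continuous f := hf.continuous
  have hgc : Continuous g := hg.continuous
  have hg'c : Continuous (deriv g) := hg.continuous_deriv le_rfl
  have hRne : (R : ℝ) ≠ 0 := Nat.cast_ne_zero.mpr hR.ne'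
  have hRpos : (0 : ℝ) < R := Nat.cast_pos.mpr hR
  set I : ℝ := ∫ x in (0:ℝ)..1, f x with hI
  set C : ℝ := ∫ x in (0:ℝ)..1, |f x| with hC
  have hfint : ∀ a b : ℝ, IntervalIntegrable f volume a b := fun a b =>
    hfc.intervalIntegrable a b
  set F : ℝ → ℝ := fun x => ∫ t in (0:ℝ)..x, f t with hF
  have hFderiv : ∀ x : ℝ, HasDerivAt F (f x) x := fun x =>
    intervalIntegral.integral_hasDerivAt_right (hfint 0 x)
      (hfc.stronglyMeasurableAtFilter _ _) hfc.continuousAt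
  have hFcont : Continuous F :=
    continuous_iff_continuousAt.mpr fun x => (hFderiv x).continuousAt
  set H : ℝ → ℝ := fun y => F y - y * I with hH
  have hHcont : Continuous H := hFcont.sub (continuous_id.mul continuous_const)
  -- H is 1-periodic
  have hHper : Function.Periodic H 1 := by
    intro y
    have h1 : F (y + 1) = F y + ∫ t in y..(y+1), f t :=
      (integral_add_adjacent_intervals (hfint 0 y) (hfint y (y+1))).symm
    have h2 : (∫ t in y..(y+1), f t) = I := by
      simpa using hfper.intervalIntegral_add_eq y 0
    simp only [hH, h1, h2]
    ring
  -- |H y| ≤ C on [0,1]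
  have hHbound01 : ∀ y ∈ Set.Icc (0:ℝ) 1, |H y| ≤ C := by
    rintro y ⟨hy0, hy1⟩
    have hsplit : I = F y + ∫ t in y..1, f t :=
      (integral_add_adjacent_intervals (hfint 0 y) (hfint y 1)).symm
    have hA : |F y| ≤ ∫ t in (0:ℝ)..y, |f t| :=
      intervalIntegral.abs_integral_le_integral_abs hy0
    have hB : |∫ t in y..1, f t| ≤ ∫ t in y..1, |f t| :=
      intervalIntegral.abs_integral_le_integral_abs hy1
    have hCsplit : C = (∫ t in (0:ℝ)..y, |f t|) + ∫ t in y..1, |f t| :=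
      (integral_add_adjacent_intervals ((hfc.abs).intervalIntegrable 0 y)
        ((hfc.abs).intervalIntegrable y 1)).symm
    have hkey : H y = (1 - y) * F y - y * (∫ t in y..1, f t) := by
      simp only [hH]; rw [hsplit]; ring
    have habs : |H y| ≤ (1 - y) * |F y| + y * |∫ t in y..1, f t| := by
      rw [hkey]
      calc |(1 - y) * F y - y * (∫ t in y..1, f t)|
          ≤ |(1 - y) * F y| + |y * (∫ t in y..1, f t)| := abs_sub _ _
        _ = (1 - y) * |F y| + y * |∫ t in y..1, f t| := by
            rw [abs_mul, abs_mul, abs_of_nonneg (by linarith : (0:ℝ) ≤ 1 - y),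
              abs_of_nonneg hy0]
    have h1 : (0:ℝ) ≤ |F y| := abs_nonneg _
    have h2 : (0:ℝ) ≤ |∫ t in y..1, f t| := abs_nonneg _
    nlinarith [habs, hA, hB]
  -- |H y| ≤ C everywhere
  have hHbound : ∀ y : ℝ, |H y| ≤ C := by
    intro y
    have h1 : H (Int.fract y) = H y := by
      have h := hHper.sub_int_mul_eq (x := y) (n := ⌊y⌋)
      rw [mul_one, Int.self_sub_floor] at h
      exact h
    rw [← h1]
    exact hHbound01 _ ⟨Int.fract_nonneg y, (Int.fract_lt_one y).le⟩
  -- F at integer R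
  have hFR : F (R : ℝ) = (R : ℝ) * I := by
    have := hfper.intervalIntegral_add_zsmul_eq (R : ℤ) 0 hfint
    simpa [hF, hI] using this
  -- integration by parts with v x = R⁻¹ * F (R x)
  set v : ℝ → ℝ := fun x => (R:ℝ)⁻¹ * F ((R:ℝ) * x) with hv
  have hvderiv : ∀ x ∈ Set.uIcc (0:ℝ) 1, HasDerivAt v (f ((R:ℝ) * x)) x := by
    intro x _
    have h1 : HasDerivAt (fun x : ℝ => (R:ℝ) * x) (R:ℝ) x := by
      simpa using (hasDerivAt_id x).const_mul (R:ℝ)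
    have h2 : HasDerivAt (fun x : ℝ => F ((R:ℝ) * x)) (f ((R:ℝ) * x) * (R:ℝ)) x :=
      (hFderiv ((R:ℝ) * x)).comp x h1
    have h3 := h2.const_mul (R:ℝ)⁻¹
    exact h3.congr_deriv (by rw [mul_comm (f _) _, ← mul_assoc, inv_mul_cancel₀ hRne, one_mul])
  have hgderiv : ∀ x ∈ Set.uIcc (0:ℝ) 1, HasDerivAt g (deriv g x) x := fun x _ =>
    (hg.differentiable one_ne_zero x).hasDerivAt
  have hfRcont : Continuous (fun x : ℝ => f ((R:ℝ) * x)) :=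
    hfc.comp (continuous_const.mul continuous_id)
  have ibp1 : (∫ x in (0:ℝ)..1, g x * f ((R:ℝ) * x)) =
      g 1 * v 1 - g 0 * v 0 - ∫ x in (0:ℝ)..1, deriv g x * v x :=
    intervalIntegral.integral_mul_deriv_eq_deriv_mul hgderiv hvderiv
      (hg'c.intervalIntegrable 0 1) (hfRcont.intervalIntegrable 0 1)
  have hv1 : v 1 = I := by
    simp only [hv, mul_one, hFR]
    field_simp
  have hv0 : v 0 = 0 := by
    simp [hv, hF, intervalIntegral.integral_same]
  -- second integration by parts : ∫ x * g'(x) = g 1 - ∫ g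
  have ibp2 : (∫ x in (0:ℝ)..1, x * deriv g x) = g 1 - ∫ x in (0:ℝ)..1, g x := by
    have h := intervalIntegral.integral_mul_deriv_eq_deriv_mul
      (u := fun x : ℝ => x) (u' := fun _ : ℝ => (1:ℝ)) (v := g) (v' := deriv g)
      (fun x _ => hasDerivAt_id x) hgderiv
      (intervalIntegrable_const) (hg'c.intervalIntegrable 0 1)
    simpa using h
  -- split v
  have vsplit : ∀ x : ℝ, v x = (R:ℝ)⁻¹ * H ((R:ℝ) * x) + x * I := by
    intro x
    simp only [hv, hH]
    field_simp
    ring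
  set J : ℝ := ∫ x in (0:ℝ)..1, deriv g x * ((R:ℝ)⁻¹ * H ((R:ℝ) * x)) with hJ
  have hsplit_int : (∫ x in (0:ℝ)..1, deriv g x * v x) =
      J + I * ∫ x in (0:ℝ)..1, x * deriv g x := by
    have h1 : ∀ x : ℝ, deriv g x * v x =
        deriv g x * ((R:ℝ)⁻¹ * H ((R:ℝ) * x)) + I * (x * deriv g x) := by
      intro x; rw [vsplit x]; ring
    rw [intervalIntegral.integral_congr (g := fun x =>
        deriv g x * ((R:ℝ)⁻¹ * H ((R:ℝ) * x)) + I * (x * deriv g x))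
        (fun x _ => h1 x)]
    rw [intervalIntegral.integral_add, intervalIntegral.integral_const_mul]
    · exact (hg'c.mul (continuous_const.mul
        (hHcont.comp (continuous_const.mul continuous_id)))).intervalIntegrable 0 1
    · exact (continuous_const.mul ((continuous_id.mul hg'c))).intervalIntegrable 0 1
  have keyeq : (∫ x in (0:ℝ)..1, g x * f ((R:ℝ) * x)) -
      (∫ x in (0:ℝ)..1, g x) * I = -J := by
    rw [ibp1, hv1, hv0, hsplit_int, ibp2]
    ring
  rw [keyeq, abs_neg]
  -- bound |J|
  have hK0 : 0 ≤ K := le_trans (abs_nonneg _) (hK 0)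
  have hC0 : 0 ≤ C := intervalIntegral.integral_nonneg zero_le_one (fun _ _ => abs_nonneg _)
  have hJbound : |J| ≤ (K * ((R:ℝ)⁻¹ * C)) * |(1:ℝ) - 0| := by
    have := intervalIntegral.norm_integral_le_of_norm_le_const
      (C := K * ((R:ℝ)⁻¹ * C)) (f := fun x => deriv g x * ((R:ℝ)⁻¹ * H ((R:ℝ) * x)))
      (a := (0:ℝ)) (b := 1) ?_
    · simpa [Real.norm_eq_abs] using this
    · intro x _
      rw [Real.norm_eq_abs, abs_mul, abs_mul, abs_of_nonneg (inv_nonneg.mpr hRpos.le)]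
      exact mul_le_mul (hK x)
        (mul_le_mul_of_nonneg_left (hHbound _) (inv_nonneg.mpr hRpos.le))
        (mul_nonneg (inv_nonneg.mpr hRpos.le) (abs_nonneg _)) hK0
  calc |J| ≤ (K * ((R:ℝ)⁻¹ * C)) * |(1:ℝ) - 0| := hJbound
    _ = (K / (R:ℝ)) * C := by rw [div_eq_mul_inv]; simp; ring
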